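/- arXiv:1905.00717 — 5 statements merged into one kernel-verified Lean document; each statement's English description precedes it below -/
import Mathlib

section
/- For all complex x, y with |x| < 1/(1−q) and |y| < 1/(1−q), the series ∑_{n=0}^∞ (x ⊕_q y)^n/[n]_q! converges absolutely and e_q(x) · e_q(y) = ∑_{n=0}^∞ (x ⊕_q y)^n/[n]_q!. -/
open Finset

/-- The q-number `[n]_q = (1 - q^n)/(1 - q)`. -/
noncomputable def qNum (q : ℝ) (n : ℕ) : ℝ := (1 - q ^ n) / (1 - q)

/-- The q-factorial `[n]_q! = ∏_{k=1}^n [k]_q`. -/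
noncomputable def qFact (q : ℝ) (n : ℕ) : ℝ := ∏ k ∈ Finset.range n, qNum q (k + 1)

/-- The q-binomial coefficient `[n choose k]_q`. -/
noncomputable def qBinom (q : ℝ) (n k : ℕ) : ℝ := qFact q n / (qFact q k * qFact q (n - k))

/-- The Ward q-addition power `(x ⊕_q y)^n = ∑_{k=0}^n [n choose k]_q x^k y^(n-k)`. -/
noncomputable def wardPow (q : ℝ) (x y : ℂ) (n : ℕ) : ℂ :=
  ∑ k ∈ Finset.range (n + 1), (qBinom q n k : ℂ) * x ^ k * y ^ (n - k)

/-- The q-exponential `e_q(z) = ∑ z^n/[n]_q!`. -/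
noncomputable def qExp (q : ℝ) (z : ℂ) : ℂ := ∑' n : ℕ, z ^ n / (qFact q n : ℂ)

lemma qNum_pos {q : ℝ} (hq0 : 0 < q) (hq1 : q < 1) (n : ℕ) : 0 < qNum q (n + 1) := by
  have h : q ^ (n + 1) < 1 := pow_lt_one₀ hq0.le hq1 (Nat.succ_ne_zero n)
  unfold qNum
  apply div_pos <;> linarith

lemma qFact_pos {q : ℝ} (hq0 : 0 < q) (hq1 : q < 1) (n : ℕ) : 0 < qFact q n :=
  Finset.prod_pos fun k _ => qNum_pos hq0 hq1 k

lemma summable_qexp {q : ℝ} (hq0 : 0 < q) (hq1 : q < 1) (z : ℂ)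
    (hz : ‖z‖ < 1 / (1 - q)) :
    Summable (fun n : ℕ => ‖z ^ n / (qFact q n : ℂ)‖) := by
  have hq : (0:ℝ) < 1 - q := by linarith
  have h1 : (1 - q) * ‖z‖ < 1 := by
    rw [lt_div_iff₀ hq] at hz; linarith
  set r : ℝ := ((1 - q) * ‖z‖ + 1) / 2 with hr
  have hr0 : 0 < r := by positivity
  have hr1 : r < 1 := by
    have : 0 ≤ (1 - q) * ‖z‖ := by positivity
    rw [hr]; linarith
  have hzr : (1 - q) * ‖z‖ < r := by rw [hr]; linarith
  apply summable_of_ratio_norm_eventually_le hr1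
  have htend : Filter.Tendsto (fun n : ℕ => q ^ (n + 1)) Filter.atTop (nhds 0) :=
    (tendsto_pow_atTop_nhds_zero_of_lt_one hq0.le hq1).comp (Filter.tendsto_add_atTop_nat 1)
  have hpos : 0 < (r - (1 - q) * ‖z‖) / r := by apply div_pos <;> linarith
  have hev : ∀ᶠ n : ℕ in Filter.atTop, q ^ (n + 1) < (r - (1 - q) * ‖z‖) / r :=
    htend.eventually (gt_mem_nhds hpos)
  filter_upwards [hev] with n hn
  have h2 : q ^ (n + 1) * r < r - (1 - q) * ‖z‖ := (lt_div_iff₀ hr0).mp hn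
  have hfp := qFact_pos hq0 hq1 n
  have hnp := qNum_pos hq0 hq1 n
  have hfact : qFact q (n + 1) = qFact q n * qNum q (n + 1) := Finset.prod_range_succ _ _
  have key : ‖z‖ ≤ r * qNum q (n + 1) := by
    unfold qNum
    rw [← mul_div_assoc, le_div_iff₀ hq]
    nlinarith
  rw [Real.norm_of_nonneg (norm_nonneg _), Real.norm_of_nonneg (norm_nonneg _)]
  simp only [norm_div, norm_pow, Complex.norm_real, Real.norm_eq_abs, hfact]
  rw [abs_of_pos hfp, abs_of_pos (by positivity : (0:ℝ) < qFact q n * qNum q (n + 1)),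
    div_le_iff₀ (by positivity)]
  have heq : r * (‖z‖ ^ n / qFact q n) * (qFact q n * qNum q (n + 1))
      = r * qNum q (n + 1) * ‖z‖ ^ n := by field_simp
  rw [heq, pow_succ]
  nlinarith [pow_nonneg (norm_nonneg z) n, key]

theorem stmt_1 (q : ℝ) (hq0 : 0 < q) (hq1 : q < 1) (x y : ℂ)
    (hx : ‖x‖ < 1 / (1 - q)) (hy : ‖y‖ < 1 / (1 - q)) :
    Summable (fun n : ℕ => ‖wardPow q x y n / (qFact q n : ℂ)‖) ∧
      qExp q x * qExp q y = ∑' n : ℕ, wardPow q x y n / (qFact q n : ℂ) := by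
  have hfx := summable_qexp hq0 hq1 x hx
  have hfy := summable_qexp hq0 hq1 y hy
  have hward : ∀ n : ℕ, wardPow q x y n / (qFact q n : ℂ)
      = ∑ k ∈ Finset.range (n + 1),
          (x ^ k / (qFact q k : ℂ)) * (y ^ (n - k) / (qFact q (n - k) : ℂ)) := by
    intro n
    unfold wardPow qBinom
    rw [Finset.sum_div]
    apply Finset.sum_congr rfl
    intro k hk
    have h1 : (qFact q n : ℂ) ≠ 0 := by
      exact_mod_cast (qFact_pos hq0 hq1 n).ne'
    have h2 : (qFact q k : ℂ) ≠ 0 := by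
      exact_mod_cast (qFact_pos hq0 hq1 k).ne'
    have h3 : (qFact q (n - k) : ℂ) ≠ 0 := by
      exact_mod_cast (qFact_pos hq0 hq1 (n - k)).ne'
    push_cast
    field_simp
  constructor
  · have := summable_norm_sum_mul_range_of_summable_norm hfx hfy
    simpa only [← hward] using this
  · have := tsum_mul_tsum_eq_tsum_sum_range_of_summable_norm hfx hfy
    unfold qExp
    rw [this]
    exact (tsum_congr fun n => (hward n).symm)
end

section
/- For all complex a, b, r, s with |a| < |r| and |b| < |s|, the series ∑_{n=0}^∞ (−1)^n ∑_{k=0}^{2n+1} a^k b^{2n+1−k}/(r^{k+1} s^{2n+2−k}) converges absolutely and equals (as + br)/((r² + a²)(s² + b²)). -/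
lemma sum_range_two_mul' {M : Type*} [AddCommMonoid M] (m : ℕ) (f : ℕ → M) :
    ∑ k ∈ Finset.range (2 * m), f k = ∑ i ∈ Finset.range m, (f (2 * i) + f (2 * i + 1)) := by
  induction m with
  | zero => simp
  | succ m ih =>
    rw [Finset.sum_range_succ, ← ih, show 2 * (m + 1) = (2 * m + 1) + 1 by ring,
      Finset.sum_range_succ, Finset.sum_range_succ, add_assoc]

theorem stmt_8 (a b r s : ℂ) (ha : ‖a‖ < ‖r‖)
    (hb : ‖b‖ < ‖s‖) :
    Summable (fun n : ℕ =>
        ‖(-1 : ℂ) ^ n * ∑ k ∈ Finset.range (2 * n + 2),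
            a ^ k * b ^ (2 * n + 1 - k) / (r ^ (k + 1) * s ^ (2 * n + 2 - k))‖) ∧
      ∑' n : ℕ, ((-1 : ℂ) ^ n * ∑ k ∈ Finset.range (2 * n + 2),
          a ^ k * b ^ (2 * n + 1 - k) / (r ^ (k + 1) * s ^ (2 * n + 2 - k))) =
        (a * s + b * r) / ((r ^ 2 + a ^ 2) * (s ^ 2 + b ^ 2)) := by
  have hr : r ≠ 0 := by
    intro h; rw [h] at ha; simp at ha
    exact absurd ha (norm_nonneg a).not_gt
  have hs : s ≠ 0 := by
    intro h; rw [h] at hb; simp at hb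
    exact absurd hb (norm_nonneg b).not_gt
  have hra : r ^ 2 + a ^ 2 ≠ 0 := by
    intro h
    have h2 : ‖a ^ 2‖ = ‖r ^ 2‖ := by
      rw [show a ^ 2 = -r ^ 2 by linear_combination h]; simp
    simp only [norm_pow] at h2
    nlinarith [norm_nonneg a, norm_nonneg r]
  have hsb : s ^ 2 + b ^ 2 ≠ 0 := by
    intro h
    have h2 : ‖b ^ 2‖ = ‖s ^ 2‖ := by
      rw [show b ^ 2 = -s ^ 2 by linear_combination h]; simp
    simp only [norm_pow] at h2
    nlinarith [norm_nonneg b, norm_nonneg s]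
  set u : ℂ := -(a / r) ^ 2 with hu
  set v : ℂ := -(b / s) ^ 2 with hv
  have ha' : ‖a‖ < ‖r‖ := by simpa using ha
  have hb' : ‖b‖ < ‖s‖ := by simpa using hb
  have hnu : ‖u‖ < 1 := by
    rw [hu, norm_neg, norm_pow, norm_div, div_pow,
      div_lt_one (pow_pos (norm_pos_iff.mpr hr) 2)]
    exact pow_lt_pow_left₀ ha' (norm_nonneg a) (by norm_num)
  have hnv : ‖v‖ < 1 := by
    rw [hv, norm_neg, norm_pow, norm_div, div_pow,
      div_lt_one (pow_pos (norm_pos_iff.mpr hs) 2)]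
    exact pow_lt_pow_left₀ hb' (norm_nonneg b) (by norm_num)
  have hfu : Summable fun n : ℕ => ‖u ^ n‖ := by
    simpa [norm_pow] using summable_geometric_of_lt_one (norm_nonneg u) hnu
  have hfv : Summable fun n : ℕ => ‖v ^ n‖ := by
    simpa [norm_pow] using summable_geometric_of_lt_one (norm_nonneg v) hnv
  set c : ℂ := (a * s + b * r) / (r ^ 2 * s ^ 2) with hc
  have key : ∀ n : ℕ,
      ((-1 : ℂ) ^ n * ∑ k ∈ Finset.range (2 * n + 2),
          a ^ k * b ^ (2 * n + 1 - k) / (r ^ (k + 1) * s ^ (2 * n + 2 - k))) =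
        c * ∑ i ∈ Finset.range (n + 1), u ^ i * v ^ (n - i) := by
    intro n
    rw [show 2 * n + 2 = 2 * (n + 1) by ring, sum_range_two_mul', Finset.mul_sum,
      Finset.mul_sum]
    apply Finset.sum_congr rfl
    intro i hi
    have hin : i ≤ n := Nat.lt_succ_iff.mp (Finset.mem_range.mp hi)
    obtain ⟨j, rfl⟩ : ∃ j, n = i + j := ⟨n - i, by omega⟩
    have e1 : 2 * (i + j) + 1 - 2 * i = 2 * j + 1 := by omega
    have e2 : 2 * (i + j + 1) - 2 * i = 2 * j + 2 := by omega
    have e3 : 2 * (i + j) + 1 - (2 * i + 1) = 2 * j := by omega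
    have e4 : 2 * (i + j + 1) - (2 * i + 1) = 2 * j + 1 := by omega
    have e5 : i + j - i = j := by omega
    rw [e1, e2, e3, e4, e5, hu, hv, hc]
    rw [neg_pow ((a / r) ^ 2), neg_pow ((b / s) ^ 2), div_pow, div_pow, div_pow, div_pow]
    field_simp
    ring
  refine ⟨?_, ?_⟩
  · simp_rw [key]
    simpa [norm_mul] using
      (summable_norm_sum_mul_range_of_summable_norm hfu hfv).mul_left ‖c‖
  · rw [tsum_congr key, tsum_mul_left,
      ← tsum_mul_tsum_eq_tsum_sum_range_of_summable_norm hfu hfv,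
      tsum_geometric_of_norm_lt_one hnu, tsum_geometric_of_norm_lt_one hnv, hc, hu, hv]
    have h1u : (1 : ℂ) - -(a / r) ^ 2 ≠ 0 := by
      field_simp
      intro h
      exact hra (by field_simp at h; linear_combination h)
    have h1v : (1 : ℂ) - -(b / s) ^ 2 ≠ 0 := by
      field_simp
      intro h
      exact hsb (by field_simp at h; linear_combination h)
    field_simp
    rw [div_eq_iff (mul_ne_zero (by rwa [sub_neg_eq_add]) (by rwa [sub_neg_eq_add]))]
    ring
end

section
/- Let (a_n)_{n≥0} be a sequence of complex numbers whose power series H(u) = ∑_{n=0}^∞ a_n u^n has radius of convergence ρ, and let α, β, r, s be complex numbers with r ≠ 0, s ≠ 0, αs ≠ βr, |α/r| < ρ and |β/s| < ρ. Then the double series ∑_{n=0}^∞ ∑_{k=0}^n a_n α^k β^{n−k}/(r^{k+1} s^{n+1−k}) converges and equals (1/(αs − βr)) · (F(α/r) − F(β/s)), where F(u) = ∑_{n=0}^∞ a_n u^{n+1}. -/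
open scoped ENNReal

theorem stmt_11 (a : ℕ → ℂ) (ρ : ℝ≥0∞)
    (hρ : (FormalMultilinearSeries.ofScalars ℂ a).radius = ρ)
    (α β r s : ℂ) (hr : r ≠ 0) (hs : s ≠ 0) (h : α * s ≠ β * r)
    (hα : (‖α / r‖₊ : ℝ≥0∞) < ρ) (hβ : (‖β / s‖₊ : ℝ≥0∞) < ρ) :
    HasSum
      (fun n : ℕ => a n *
        ∑ k ∈ Finset.range (n + 1), α ^ k * β ^ (n - k) / (r ^ (k + 1) * s ^ (n + 1 - k)))
      ((1 / (α * s - β * r)) *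
        ((∑' n : ℕ, a n * (α / r) ^ (n + 1)) - ∑' n : ℕ, a n * (β / s) ^ (n + 1))) := by
  set x := α / r with hxdef
  set y := β / s with hydef
  have hD : α * s - β * r ≠ 0 := sub_ne_zero.mpr h
  have hsummable : ∀ z : ℂ, (‖z‖₊ : ℝ≥0∞) < ρ → Summable fun n => a n * z ^ (n + 1) := by
    intro z hz
    have hmem : z ∈ Metric.eball (0 : ℂ) (FormalMultilinearSeries.ofScalars ℂ a).radius := by
      rw [Metric.mem_eball, edist_zero_right, enorm_eq_nnnorm, hρ]; exact hz
    have := (FormalMultilinearSeries.ofScalars ℂ a).summable hmem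
    have h1 : Summable fun n => a n * z ^ n := by
      refine this.congr fun n => ?_
      rw [FormalMultilinearSeries.ofScalars_apply_eq, smul_eq_mul]
    simpa [pow_succ, mul_assoc] using h1.mul_right z
  have hx1 : Summable fun n => a n * x ^ (n + 1) := hsummable x hα
  have hy1 : Summable fun n => a n * y ^ (n + 1) := hsummable y hβ
  have key : ∀ n : ℕ, a n *
      ∑ k ∈ Finset.range (n + 1), α ^ k * β ^ (n - k) / (r ^ (k + 1) * s ^ (n + 1 - k))
      = (1 / (α * s - β * r)) * (a n * x ^ (n + 1) - a n * y ^ (n + 1)) := by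
    intro n
    have hsum : ∑ k ∈ Finset.range (n + 1), α ^ k * β ^ (n - k) / (r ^ (k + 1) * s ^ (n + 1 - k))
        = (∑ k ∈ Finset.range (n + 1), x ^ k * y ^ (n - k)) / (r * s) := by
      rw [Finset.sum_div]
      refine Finset.sum_congr rfl fun k hk => ?_
      have hkn : k ≤ n := Nat.lt_succ_iff.mp (Finset.mem_range.mp hk)
      have hnk : n + 1 - k = (n - k) + 1 := by omega
      rw [hnk, hxdef, hydef, div_pow, div_pow, div_mul_div_comm, div_div]
      congr 1
      ring
    have hG : (∑ k ∈ Finset.range (n + 1), x ^ k * y ^ (n - k)) * (x - y)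
        = x ^ (n + 1) - y ^ (n + 1) := by
      have := geom_sum₂_mul x y (n + 1)
      simpa using this
    have hxy : (x - y) * (r * s) = α * s - β * r := by
      rw [hxdef, hydef]; field_simp
    rw [hsum]
    set G := ∑ k ∈ Finset.range (n + 1), x ^ k * y ^ (n - k) with hGdef
    have hxy0 : x - y ≠ 0 := by
      intro e
      exact hD (by rw [← hxy, e, zero_mul])
    have hrs : r * s ≠ 0 := mul_ne_zero hr hs
    rw [← hxy, show a n * x ^ (n + 1) - a n * y ^ (n + 1)
        = a n * (x ^ (n + 1) - y ^ (n + 1)) from (mul_sub _ _ _).symm, ← hG]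
    field_simp
  rw [show (fun n : ℕ => a n *
      ∑ k ∈ Finset.range (n + 1), α ^ k * β ^ (n - k) / (r ^ (k + 1) * s ^ (n + 1 - k)))
      = fun n : ℕ => (1 / (α * s - β * r)) * (a n * x ^ (n + 1) - a n * y ^ (n + 1))
      from funext key]
  exact (hx1.hasSum.sub hy1.hasSum).mul_left _
end

section
/- For all complex a, b, r, s with |a| < q|r| and |b| < q|s|, the series ∑_{n=0}^∞ (−1)^n q^{−2n} ∑_{k=0}^{2n} a^k b^{2n−k}/(r^{k+1} s^{2n−k+1}) converges absolutely and equals q²(q²rs − ab)/((q²r² + a²)(q²s² + b²)). -/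
open Complex Finset

private lemma term_eq (q a b r s : ℂ) (hq : q ≠ 0) (hr : r ≠ 0) (hs : s ≠ 0)
    (n k : ℕ) (hk : k ≤ 2 * n) :
    (-1:ℂ)^n * (q^(2*n))⁻¹ * (a^k * b^(2*n-k) / (r^(k+1) * s^(2*n-k+1))) =
      (r*s)⁻¹ * ((Complex.I*a/(q*r))^k * (Complex.I*b/(q*s))^(2*n-k)) := by
  set m := 2*n - k with hm
  have h2 : k + m = 2*n := by omega
  have hI : Complex.I^k * Complex.I^m = (-1:ℂ)^n := by
    rw [← pow_add, h2, pow_mul, Complex.I_sq]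
  have hq2 : q^(2*n) = q^k * q^m := by rw [← pow_add, h2]
  have expand : (Complex.I*a/(q*r))^k * (Complex.I*b/(q*s))^m
      = (Complex.I^k * Complex.I^m) * ((a/(q*r))^k * (b/(q*s))^m) := by
    rw [mul_div_assoc, mul_div_assoc, mul_pow, mul_pow]; ring
  rw [expand, hI, hq2, div_pow, div_pow, mul_pow, mul_pow]
  have h3 : q^k ≠ 0 := pow_ne_zero _ hq
  have h4 : q^m ≠ 0 := pow_ne_zero _ hq
  have h5 : r^k ≠ 0 := pow_ne_zero _ hr
  have h6 : s^m ≠ 0 := pow_ne_zero _ hs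
  field_simp
  ring_nf

set_option maxHeartbeats 1000000 in
theorem stmt_14 (q : ℝ) (hq0 : 0 < q) (hq1 : q < 1) (a b r s : ℂ)
    (ha : ‖a‖ < q * ‖r‖) (hb : ‖b‖ < q * ‖s‖) :
    Summable (fun n : ℕ =>
        ‖(-1 : ℂ) ^ n * ((q : ℂ) ^ (2 * n))⁻¹ * ∑ k ∈ Finset.range (2 * n + 1),
            a ^ k * b ^ (2 * n - k) / (r ^ (k + 1) * s ^ (2 * n - k + 1))‖) ∧
      ∑' n : ℕ, ((-1 : ℂ) ^ n * ((q : ℂ) ^ (2 * n))⁻¹ * ∑ k ∈ Finset.range (2 * n + 1),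
          a ^ k * b ^ (2 * n - k) / (r ^ (k + 1) * s ^ (2 * n - k + 1))) =
        (q : ℂ) ^ 2 * ((q : ℂ) ^ 2 * r * s - a * b) /
          (((q : ℂ) ^ 2 * r ^ 2 + a ^ 2) * ((q : ℂ) ^ 2 * s ^ 2 + b ^ 2)) := by
  have hra : (0:ℝ) ≤ ‖a‖ := norm_nonneg a
  have hrb : (0:ℝ) ≤ ‖b‖ := norm_nonneg b
  have hrpos : 0 < ‖r‖ := by nlinarith
  have hspos : 0 < ‖s‖ := by nlinarith
  have hr : r ≠ 0 := by simpa using norm_pos_iff.mp hrpos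
  have hs : s ≠ 0 := by simpa using norm_pos_iff.mp hspos
  have hq : (q:ℂ) ≠ 0 := Complex.ofReal_ne_zero.mpr hq0.ne'
  set w : ℂ := Complex.I * a / (q * r) with hwdef
  set z : ℂ := Complex.I * b / (q * s) with hzdef
  have hnw : ‖w‖ = ‖a‖ / (q * ‖r‖) := by
    rw [hwdef, norm_div, norm_mul, Complex.norm_I, one_mul, norm_mul,
      Complex.norm_real, Real.norm_eq_abs, abs_of_pos hq0]
  have hnz : ‖z‖ = ‖b‖ / (q * ‖s‖) := by
    rw [hzdef, norm_div, norm_mul, Complex.norm_I, one_mul, norm_mul,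
      Complex.norm_real, Real.norm_eq_abs, abs_of_pos hq0]
  have hw1 : ‖w‖ < 1 := by rw [hnw, div_lt_one (by positivity)]; exact ha
  have hz1 : ‖z‖ < 1 := by rw [hnz, div_lt_one (by positivity)]; exact hb
  -- geometric summability
  have hwsum : Summable (fun n : ℕ => ‖w ^ n‖) := by
    simpa [norm_pow] using summable_geometric_of_lt_one (norm_nonneg w) hw1
  have hzsum : Summable (fun n : ℕ => ‖z ^ n‖) := by
    simpa [norm_pow] using summable_geometric_of_lt_one (norm_nonneg z) hz1
  have hwsum' : Summable (fun n : ℕ => ‖(-w) ^ n‖) := by simpa [norm_pow] using hwsum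
  have hzsum' : Summable (fun n : ℕ => ‖(-z) ^ n‖) := by simpa [norm_pow] using hzsum
  set c : ℕ → ℂ := fun n => ∑ k ∈ Finset.range (n+1), w^k * z^(n-k) with hcdef
  have hanti : ∀ n : ℕ, (∑ kl ∈ Finset.HasAntidiagonal.antidiagonal n, w^kl.1 * z^kl.2) = c n := by
    intro n
    exact Finset.Nat.sum_antidiagonal_eq_sum_range_succ_mk (fun p => w^p.1*z^p.2) n
  have hanti' : ∀ n : ℕ, (∑ kl ∈ Finset.HasAntidiagonal.antidiagonal n, (-w)^kl.1 * (-z)^kl.2)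
      = (-1:ℂ)^n * c n := by
    intro n
    rw [Finset.Nat.sum_antidiagonal_eq_sum_range_succ_mk (fun p => (-w)^p.1*(-z)^p.2) n,
      hcdef, Finset.mul_sum]
    refine Finset.sum_congr rfl fun k hk => ?_
    have hkn : k ≤ n := Finset.mem_range_succ_iff.mp hk
    have hsgn : (-1:ℂ)^k * (-1:ℂ)^(n-k) = (-1:ℂ)^n := by
      rw [← pow_add]; congr 1; omega
    show (-w)^k * (-z)^(n-k) = (-1:ℂ)^n * (w^k * z^(n-k))
    calc (-w)^k * (-z)^(n-k)
        = ((-1:ℂ)^k * (-1:ℂ)^(n-k)) * (w^k * z^(n-k)) := by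
          rw [← neg_one_mul w, ← neg_one_mul z, mul_pow, mul_pow]; ring
      _ = (-1:ℂ)^n * (w^k * z^(n-k)) := by rw [hsgn]
  have hcnorm : Summable (fun n => ‖c n‖) := by
    have := summable_norm_sum_mul_antidiagonal_of_summable_norm hwsum hzsum
    simpa only [hanti] using this
  have hA : ∑' n, c n = (1 - w)⁻¹ * (1 - z)⁻¹ := by
    have := tsum_mul_tsum_eq_tsum_sum_antidiagonal_of_summable_norm hwsum hzsum
    simp only [hanti] at this
    rw [← this, tsum_geometric_of_norm_lt_one hw1, tsum_geometric_of_norm_lt_one hz1]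
  have hB : ∑' n, ((-1:ℂ)^n * c n) = (1 + w)⁻¹ * (1 + z)⁻¹ := by
    have := tsum_mul_tsum_eq_tsum_sum_antidiagonal_of_summable_norm hwsum' hzsum'
    simp only [hanti'] at this
    rw [← this, tsum_geometric_of_norm_lt_one (by simpa using hw1),
      tsum_geometric_of_norm_lt_one (by simpa using hz1)]
    ring_nf
  -- even/odd decomposition
  have hinj2 : Function.Injective (fun k : ℕ => 2 * k) := fun x y h => by simp only at h; omega
  have hinj2' : Function.Injective (fun k : ℕ => 2 * k + 1) := fun x y h => by simp only at h; omega
  have hc : Summable c := hcnorm.of_norm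
  have hce : Summable (fun k => c (2 * k)) := hc.comp_injective hinj2
  have hco : Summable (fun k => c (2 * k + 1)) := hc.comp_injective hinj2'
  have hEO : (∑' k, c (2 * k)) + ∑' k, c (2 * k + 1) = ∑' n, c n :=
    tsum_even_add_odd hce hco
  have hf2k : ∀ k : ℕ, (-1:ℂ)^(2*k) * c (2*k) = c (2*k) := by
    intro k; rw [pow_mul]; norm_num
  have hf2k1 : ∀ k : ℕ, (-1:ℂ)^(2*k+1) * c (2*k+1) = -(c (2*k+1)) := by
    intro k; rw [pow_succ, pow_mul]; norm_num
  have hEO' : (∑' k, c (2 * k)) - ∑' k, c (2 * k + 1) = ∑' n, ((-1:ℂ)^n * c n) := by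
    have he : Summable (fun k => (-1:ℂ)^(2*k) * c (2*k)) := by
      simpa only [hf2k] using hce
    have ho : Summable (fun k => (-1:ℂ)^(2*k+1) * c (2*k+1)) := by
      simpa only [hf2k1] using hco.neg
    have h := tsum_even_add_odd (f := fun n => (-1:ℂ)^n * c n) he ho
    simp only [hf2k, hf2k1] at h
    rw [tsum_neg] at h
    linear_combination h
  have hE : ∑' k, c (2*k) = ((1-w)⁻¹*(1-z)⁻¹ + (1+w)⁻¹*(1+z)⁻¹)/2 := by
    rw [hA] at hEO; rw [hB] at hEO'
    linear_combination (hEO + hEO')/2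
  -- rewrite the statement's general term
  have hfun : ∀ n : ℕ, ((-1:ℂ)^n * ((q:ℂ)^(2*n))⁻¹ * ∑ k ∈ Finset.range (2*n+1),
      a^k * b^(2*n-k) / (r^(k+1) * s^(2*n-k+1))) = (r*s)⁻¹ * c (2*n) := by
    intro n
    rw [Finset.mul_sum, hcdef, Finset.mul_sum]
    refine Finset.sum_congr rfl fun k hk => ?_
    exact term_eq (q:ℂ) a b r s hq hr hs n k (Finset.mem_range_succ_iff.mp hk)
  -- nonvanishing of denominators
  have h1w : (1:ℂ) - w ≠ 0 := by
    intro h; rw [sub_eq_zero] at h; rw [← h] at hw1; simp at hw1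
  have h1z : (1:ℂ) - z ≠ 0 := by
    intro h; rw [sub_eq_zero] at h; rw [← h] at hz1; simp at hz1
  have h2w : (1:ℂ) + w ≠ 0 := by
    intro h
    have hwe : w = -1 := by linear_combination h
    rw [hwe] at hw1; simp at hw1
  have h2z : (1:ℂ) + z ≠ 0 := by
    intro h
    have hze : z = -1 := by linear_combination h
    rw [hze] at hz1; simp at hz1
  have hden1 : (q:ℂ)^2 * r^2 + a^2 ≠ 0 := by
    intro h
    have ha2 : a^2 = -((q:ℂ)^2 * r^2) := by linear_combination h
    have habs : ‖a^2‖ = ‖(q:ℂ)^2 * r^2‖ := by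
      rw [ha2, norm_neg]
    rw [norm_pow, norm_mul, norm_pow, norm_pow, Complex.norm_real, Real.norm_eq_abs, abs_of_pos hq0] at habs
    nlinarith
  have hden2 : (q:ℂ)^2 * s^2 + b^2 ≠ 0 := by
    intro h
    have hb2 : b^2 = -((q:ℂ)^2 * s^2) := by linear_combination h
    have habs : ‖b^2‖ = ‖(q:ℂ)^2 * s^2‖ := by
      rw [hb2, norm_neg]
    rw [norm_pow, norm_mul, norm_pow, norm_pow, Complex.norm_real, Real.norm_eq_abs, abs_of_pos hq0] at habs
    nlinarith
  -- values of w^2, z^2, w*z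
  have hw2v : (1:ℂ) - w^2 = ((q:ℂ)^2 * r^2 + a^2) / ((q:ℂ)^2 * r^2) := by
    rw [hwdef, div_pow, mul_pow, Complex.I_sq]
    field_simp
    ring
  have hz2v : (1:ℂ) - z^2 = ((q:ℂ)^2 * s^2 + b^2) / ((q:ℂ)^2 * s^2) := by
    rw [hzdef, div_pow, mul_pow, Complex.I_sq]
    field_simp
    ring
  have hwzv : (1:ℂ) + w * z = ((q:ℂ)^2 * r * s - a * b) / ((q:ℂ)^2 * r * s) := by
    rw [hwdef, hzdef, div_mul_div_comm,
      show Complex.I * a * (Complex.I * b) = Complex.I^2 * (a*b) by ring, Complex.I_sq]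
    field_simp
    ring
  have hstep : ((1-w)⁻¹*(1-z)⁻¹ + (1+w)⁻¹*(1+z)⁻¹)/2
      = (1 + w*z) / ((1 - w^2) * (1 - z^2)) := by
    have hd1 : (1:ℂ) - w^2 = (1-w)*(1+w) := by ring
    have hd2 : (1:ℂ) - z^2 = (1-z)*(1+z) := by ring
    rw [hd1, hd2]
    field_simp
    ring
  constructor
  · have hfn : (fun n : ℕ =>
        ‖(-1 : ℂ) ^ n * ((q : ℂ) ^ (2 * n))⁻¹ * ∑ k ∈ Finset.range (2 * n + 1),
            a ^ k * b ^ (2 * n - k) / (r ^ (k + 1) * s ^ (2 * n - k + 1))‖) =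
        fun n => ‖(r*s)⁻¹‖ * ‖c (2*n)‖ := by
      funext n; rw [hfun n, norm_mul]
    rw [hfn]
    exact (hcnorm.comp_injective hinj2).mul_left _
  · calc ∑' n : ℕ, ((-1 : ℂ) ^ n * ((q : ℂ) ^ (2 * n))⁻¹ * ∑ k ∈ Finset.range (2 * n + 1),
          a ^ k * b ^ (2 * n - k) / (r ^ (k + 1) * s ^ (2 * n - k + 1)))
        = ∑' n : ℕ, (r*s)⁻¹ * c (2*n) := by
          exact tsum_congr hfun
      _ = (r*s)⁻¹ * ∑' n : ℕ, c (2*n) := tsum_mul_left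
      _ = (r*s)⁻¹ * ((1 + w*z) / ((1 - w^2) * (1 - z^2))) := by rw [hE, hstep]
      _ = (q : ℂ) ^ 2 * ((q : ℂ) ^ 2 * r * s - a * b) /
          (((q : ℂ) ^ 2 * r ^ 2 + a ^ 2) * ((q : ℂ) ^ 2 * s ^ 2 + b ^ 2)) := by
          rw [hw2v, hz2v, hwzv, div_mul_div_comm, div_div_eq_mul_div, mul_div_assoc']
          congr 1
          rw [inv_eq_one_div, ← mul_assoc, div_mul_div_comm, one_mul, div_mul_eq_mul_div,
            div_eq_iff (by simp [hq, hr, hs, pow_ne_zero])]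
          ring
end

section
/- Let (a_n)_{n≥0} be a sequence of complex numbers whose power series H(u) = ∑_{n=0}^∞ a_n u^n has radius of convergence ρ, and let α, β, r, s be complex numbers with r ≠ 0, s ≠ 0, αs ≠ βr, |α/(qr)| < ρ and |β/(qs)| < ρ. Then the double series ∑_{n=0}^∞ a_n q^{−n} ∑_{k=0}^n α^k β^{n−k}/(r^{k+1} s^{n+1−k}) converges and equals (1/(αs − βr)) · ((α/r) H(α/(qr)) − (β/s) H(β/(qs))). -/
open scoped ENNReal

theorem stmt_16 (q : ℝ) (hq0 : 0 < q) (hq1 : q < 1) (a : ℕ → ℂ) (ρ : ℝ≥0∞)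
    (hρ : (FormalMultilinearSeries.ofScalars ℂ a).radius = ρ)
    (α β r s : ℂ) (hr : r ≠ 0) (hs : s ≠ 0) (h : α * s ≠ β * r)
    (hα : (‖α / ((q : ℂ) * r)‖₊ : ℝ≥0∞) < ρ) (hβ : (‖β / ((q : ℂ) * s)‖₊ : ℝ≥0∞) < ρ) :
    HasSum
      (fun n : ℕ => a n * ((q : ℂ) ^ n)⁻¹ *
        ∑ k ∈ Finset.range (n + 1), α ^ k * β ^ (n - k) / (r ^ (k + 1) * s ^ (n + 1 - k)))
      ((1 / (α * s - β * r)) *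
        ((α / r) * (∑' n : ℕ, a n * (α / ((q : ℂ) * r)) ^ n) -
          (β / s) * ∑' n : ℕ, a n * (β / ((q : ℂ) * s)) ^ n)) := by
  have hq : (q : ℂ) ≠ 0 := by exact_mod_cast hq0.ne'
  have hnorm : ∀ n, ‖FormalMultilinearSeries.ofScalars ℂ a n‖ = ‖a n‖ := by
    intro n
    rw [FormalMultilinearSeries.ofScalars]
    exact (norm_smul (a n) (ContinuousMultilinearMap.mkPiAlgebraFin ℂ n ℂ)).trans
      (by rw [ContinuousMultilinearMap.norm_mkPiAlgebraFin, mul_one])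
  have hsum : ∀ x : ℂ, (‖x‖₊ : ℝ≥0∞) < ρ → Summable fun n => a n * x ^ n := by
    intro x hx
    have hs' := (FormalMultilinearSeries.ofScalars ℂ a).summable_norm_mul_pow (r := ‖x‖₊)
      (by rw [hρ]; exact hx)
    refine Summable.of_norm ?_
    simpa [hnorm, norm_mul, norm_pow] using hs'
  have h1 := (hsum _ hα).hasSum
  have h2 := (hsum _ hβ).hasSum
  have H := ((h1.mul_left (α / r)).sub (h2.mul_left (β / s))).mul_left (1 / (α * s - β * r))
  have hd : α * s - β * r ≠ 0 := sub_ne_zero_of_ne h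
  have hxy : α / r - β / s ≠ 0 := by
    have hrepr : α / r - β / s = (α * s - β * r) / (r * s) := by
      field_simp
    rw [hrepr]
    exact div_ne_zero hd (mul_ne_zero hr hs)
  have key : (fun n : ℕ => a n * ((q : ℂ) ^ n)⁻¹ *
        ∑ k ∈ Finset.range (n + 1), α ^ k * β ^ (n - k) / (r ^ (k + 1) * s ^ (n + 1 - k)))
      = fun n : ℕ => (1 / (α * s - β * r)) *
        ((α / r) * (a n * (α / ((q : ℂ) * r)) ^ n) -
          (β / s) * (a n * (β / ((q : ℂ) * s)) ^ n)) := by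
    funext n
    have hterm : ∀ k ∈ Finset.range (n + 1),
        α ^ k * β ^ (n - k) / (r ^ (k + 1) * s ^ (n + 1 - k))
          = (α / r) ^ k * (β / s) ^ (n - k) * (r * s)⁻¹ := by
      intro k hk
      have hk' : k ≤ n := Nat.lt_succ_iff.mp (Finset.mem_range.mp hk)
      have h1n : n + 1 - k = (n - k) + 1 := by omega
      rw [h1n, div_pow, div_pow, pow_succ, pow_succ]
      ring
    rw [Finset.sum_congr rfl hterm, ← Finset.sum_mul]
    have hg := geom_sum₂_mul (α / r) (β / s) (n + 1)
    simp only [Nat.add_sub_cancel] at hg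
    have hS : ∑ i ∈ Finset.range (n + 1), (α / r) ^ i * (β / s) ^ (n - i)
        = ((α / r) ^ (n + 1) - (β / s) ^ (n + 1)) / (α / r - β / s) := by
      rw [eq_div_iff hxy]; exact hg
    rw [hS]
    have e0 : α / ((q : ℂ) * r) = α / r / (q : ℂ) := by
      rw [div_div, mul_comm]
    have e0' : β / ((q : ℂ) * s) = β / s / (q : ℂ) := by
      rw [div_div, mul_comm]
    have e1 : (α / ((q : ℂ) * r)) ^ n = (α / r) ^ n / (q : ℂ) ^ n := by
      rw [e0, div_pow]
    have e2 : (β / ((q : ℂ) * s)) ^ n = (β / s) ^ n / (q : ℂ) ^ n := by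
      rw [e0', div_pow]
    have hfac : α * s - β * r = (α / r - β / s) * (r * s) := by
      field_simp
    rw [e1, e2, hfac]
    have hqn : (q : ℂ) ^ n ≠ 0 := pow_ne_zero _ hq
    have hrs : r * s ≠ 0 := mul_ne_zero hr hs
    generalize α / r = u at hxy ⊢
    generalize β / s = v at hxy ⊢
    generalize (q : ℂ) ^ n = w at hqn ⊢
    generalize r * s = c at hrs ⊢
    field_simp
    ring
  rw [key]
  exact H
end
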